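/- Let H be a balanced complete bipartite graph whose edges are coloured red and blue. Then either H is spanned by two vertex-disjoint monochromatic connected matchings, one of each colour, or the colouring is split and H is spanned both by one red and two blue vertex-disjoint monochromatic connected matchings, and by one blue and two red vertex-disjoint monochromatic connected matchings. (Matchings may be empty; the empty graph, a single vertex and a single edge count as matchings.) -/

import Mathlib

open SimpleGraph

/-- The simple graph on `α ⊕ β` whose edges are the colour-`c` edges of the
(not necessarily proper) edge-colouring `χ` of the complete bipartite graph
with biparts `α` and `β`. -/
def colourGraph {α β : Type} {r : ℕ} (χ : α → β → Fin r) (c : Fin r) :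
    SimpleGraph (α ⊕ β) where
  Adj x y := ∃ a b, χ a b = c ∧
    ((x = Sum.inl a ∧ y = Sum.inr b) ∨ (x = Sum.inr b ∧ y = Sum.inl a))
  symm := by
    constructor
    rintro x y ⟨a, b, hc, h | h⟩
    · exact ⟨a, b, hc, Or.inr ⟨h.2, h.1⟩⟩
    · exact ⟨a, b, hc, Or.inl ⟨h.2, h.1⟩⟩
  loopless := by
    constructor
    rintro x ⟨a, b, hc, ⟨h1, h2⟩ | ⟨h1, h2⟩⟩ <;> simp_all

/-- A monochromatic component is non-trivial if it meets both biparts. -/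
def Nontriv {α β : Type} {r : ℕ} (χ : α → β → Fin r) (c : Fin r)
    (K : (colourGraph χ c).ConnectedComponent) : Prop :=
  (∃ a : α, Sum.inl a ∈ K.supp) ∧ (∃ b : β, Sum.inr b ∈ K.supp)

/-- A monochromatic connected matching in an `r`-edge-coloured `K_{n,n}`:
a matching all of whose edges have colour `colour` and lie in a single
monochromatic component. A single vertex (field `single`, allowed only when
there are no edges) and the empty graph count as degenerate matchings. -/
structure CMatching (n r : ℕ) (χ : Fin n → Fin n → Fin r) where
  colour : Fin r
  pairs : Finset (Fin n × Fin n)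
  mono : ∀ p ∈ pairs, χ p.1 p.2 = colour
  inj1 : ∀ p ∈ pairs, ∀ q ∈ pairs, p.1 = q.1 → p = q
  inj2 : ∀ p ∈ pairs, ∀ q ∈ pairs, p.2 = q.2 → p = q
  conn : ∀ p ∈ pairs, ∀ q ∈ pairs,
    (colourGraph χ colour).Reachable (Sum.inl p.1) (Sum.inl q.1)
  single : Option (Fin n ⊕ Fin n)
  hsingle : single = none ∨ pairs = ∅

/-- The vertex set covered by a monochromatic connected matching. -/
def CMatching.verts {n r : ℕ} {χ : Fin n → Fin n → Fin r} (M : CMatching n r χ) :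
    Set (Fin n ⊕ Fin n) :=
  {x | (∃ p ∈ M.pairs, x = Sum.inl p.1 ∨ x = Sum.inr p.2) ∨ x ∈ M.single}

/-- `V(K_{n,n})` can be partitioned into at most five monochromatic connected
matchings. -/
def FiveMatchingPartition {n r : ℕ} (χ : Fin n → Fin n → Fin r) : Prop :=
  ∃ M : Fin 5 → CMatching n r χ,
    (∀ i j, i ≠ j → Disjoint (M i).verts (M j).verts) ∧
    (⋃ i, (M i).verts) = Set.univ

/-- A 2-edge-colouring of `K_{n,n}` is split if all monochromatic components
are non-trivial and each colour has exactly two monochromatic components. -/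
def IsSplit {n : ℕ} (χ : Fin n → Fin n → Fin 2) : Prop :=
  (∀ (c : Fin 2) (K : (colourGraph χ c).ConnectedComponent), Nontriv χ c K) ∧
  (∀ c : Fin 2, Nat.card ((colourGraph χ c).ConnectedComponent) = 2)

-- ============ auxiliary ============
namespace Aux

variable {n : ℕ} {χ : Fin n → Fin n → Fin 2}

lemma adj_lr {c : Fin 2} {a b : Fin n} (h : χ a b = c) :
    (colourGraph χ c).Adj (Sum.inl a) (Sum.inr b) :=
  ⟨a, b, h, Or.inl ⟨rfl, rfl⟩⟩

lemma reach_of_two {c : Fin 2} {a a' b : Fin n} (h : χ a b = c) (h' : χ a' b = c) :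
    (colourGraph χ c).Reachable (Sum.inl a) (Sum.inl a') :=
  (adj_lr h).toWalk.reachable.trans (adj_lr h').toWalk.reachable.symm

/-- A walk invariant: any vertex predicate respected by adjacency is constant on
reachability classes. -/
lemma reach_invariant {c : Fin 2} (f : (Fin n ⊕ Fin n) → Prop)
    (hf : ∀ x y, (colourGraph χ c).Adj x y → (f x ↔ f y)) :
    ∀ {x y}, (colourGraph χ c).Reachable x y → (f x ↔ f y) := by
  intro x y hxy
  obtain ⟨w⟩ := hxy
  induction w with
  | nil => rfl
  | cons h p ih => exact (hf _ _ h).trans ih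

/-- Build a connected matching which pairs up `s` with `t`, all edges between
`s` and `t` having colour `c`. -/
lemma buildM (c : Fin 2) (s t : Finset (Fin n)) (hcard : s.card = t.card)
    (hcol : ∀ a ∈ s, ∀ b ∈ t, χ a b = c) :
    ∃ M : CMatching n 2 χ, M.colour = c ∧
      M.verts = {x | (∃ a ∈ s, x = Sum.inl a) ∨ ∃ b ∈ t, x = Sum.inr b} := by
  classical
  let e := Finset.equivOfCardEq hcard
  refine ⟨⟨c, s.attach.image (fun a => (a.1, (e a).1)), ?_, ?_, ?_, ?_, none, Or.inl rfl⟩,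
    rfl, ?_⟩
  · rintro p hp
    simp only [Finset.mem_image, Finset.mem_attach, true_and] at hp
    obtain ⟨a, rfl⟩ := hp
    exact hcol a.1 a.2 (e a).1 (e a).2
  · rintro p hp q hq h1
    simp only [Finset.mem_image, Finset.mem_attach, true_and] at hp hq
    obtain ⟨a, rfl⟩ := hp; obtain ⟨b, rfl⟩ := hq
    simp only at h1 ⊢
    have : a = b := Subtype.ext h1
    subst this; rfl
  · rintro p hp q hq h2
    simp only [Finset.mem_image, Finset.mem_attach, true_and] at hp hq
    obtain ⟨a, rfl⟩ := hp; obtain ⟨b, rfl⟩ := hq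
    simp only at h2 ⊢
    have : a = b := e.injective (Subtype.ext h2)
    subst this; rfl
  · rintro p hp q hq
    simp only [Finset.mem_image, Finset.mem_attach, true_and] at hp hq
    obtain ⟨a, rfl⟩ := hp; obtain ⟨b, rfl⟩ := hq
    exact reach_of_two (hcol a.1 a.2 (e a).1 (e a).2) (hcol b.1 b.2 (e a).1 (e a).2)
  · ext x
    simp only [CMatching.verts, Set.mem_setOf_eq, Finset.mem_image, Finset.mem_attach,
      true_and, Option.mem_def, reduceCtorEq, or_false]
    constructor
    · rintro ⟨p, ⟨a, rfl⟩, h | h⟩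
      · exact Or.inl ⟨a.1, a.2, h⟩
      · exact Or.inr ⟨(e a).1, (e a).2, h⟩
    · rintro (⟨a, ha, rfl⟩ | ⟨b, hb, rfl⟩)
      · exact ⟨_, ⟨⟨a, ha⟩, rfl⟩, Or.inl rfl⟩
      · exact ⟨_, ⟨e.symm ⟨b, hb⟩, rfl⟩, Or.inr (by simp)⟩

end Aux

namespace Aux
variable {n : ℕ} {χ : Fin n → Fin n → Fin 2}

def Valid (χ : Fin n → Fin n → Fin 2) (c : Fin 2) (P : Finset (Fin n × Fin n)) : Prop :=
  (∀ p ∈ P, χ p.1 p.2 = c) ∧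
  (∀ p ∈ P, ∀ q ∈ P, p.1 = q.1 → p = q) ∧
  (∀ p ∈ P, ∀ q ∈ P, p.2 = q.2 → p = q)

lemma exists_max (c : Fin 2) : ∃ P, Valid χ c P ∧ ∀ P', Valid χ c P' → P'.card ≤ P.card := by
  classical
  obtain ⟨P, hP, hmax⟩ := Finset.exists_max_image
    ((Finset.univ : Finset (Finset (Fin n × Fin n))).filter (Valid χ c)) Finset.card
    ⟨∅, by simp [Valid]⟩
  simp only [Finset.mem_filter, Finset.mem_univ, true_and] at hP hmax
  exact ⟨P, hP, fun P' h' => hmax P' (by simpa using h')⟩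

/-- key maximality consequence: an edge between unmatched vertices has the other colour -/
lemma max_unmatched {c c' : Fin 2} (hne : c ≠ c') {P : Finset (Fin n × Fin n)}
    (hP : Valid χ c P) (hmax : ∀ P', Valid χ c P' → P'.card ≤ P.card)
    {a b : Fin n} (ha : ∀ p ∈ P, p.1 ≠ a) (hb : ∀ p ∈ P, p.2 ≠ b) :
    χ a b = c' := by
  classical
  by_contra h
  have hc : χ a b = c := by omega
  have hnotin : (a, b) ∉ P := fun h => ha _ h rfl
  have : Valid χ c (insert (a, b) P) := by
    refine ⟨?_, ?_, ?_⟩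
    · rintro p hp
      rcases Finset.mem_insert.1 hp with rfl | hp
      · exact hc
      · exact hP.1 p hp
    · rintro p hp q hq h1
      rcases Finset.mem_insert.1 hp with rfl | hp <;> rcases Finset.mem_insert.1 hq with rfl | hq
      · rfl
      · exact absurd h1.symm (ha q hq)
      · exact absurd h1 (ha p hp)
      · exact hP.2.1 p hp q hq h1
    · rintro p hp q hq h2
      rcases Finset.mem_insert.1 hp with rfl | hp <;> rcases Finset.mem_insert.1 hq with rfl | hq
      · rfl
      · exact absurd h2.symm (hb q hq)
      · exact absurd h2 (hb p hp)
      · exact hP.2.2 p hp q hq h2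
  have := hmax _ this
  rw [Finset.card_insert_of_notMem hnotin] at this
  omega

open Finset in
/-- If a maximum `c`-matching lies in one `c`-component, the first disjunct holds. -/
lemma lemA {c c' : Fin 2} (hne : c ≠ c') {P : Finset (Fin n × Fin n)}
    (hP : Valid χ c P) (hmax : ∀ P', Valid χ c P' → P'.card ≤ P.card)
    (hconn : ∀ p ∈ P, ∀ q ∈ P, (colourGraph χ c).Reachable (Sum.inl p.1) (Sum.inl q.1)) :
    ∃ M₁ M₂ : CMatching n 2 χ, M₁.colour ≠ M₂.colour ∧
      Disjoint M₁.verts M₂.verts ∧ M₁.verts ∪ M₂.verts = Set.univ := by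
  classical
  set UA : Finset (Fin n) := (P.image Prod.fst)ᶜ with hUA
  set UB : Finset (Fin n) := (P.image Prod.snd)ᶜ with hUB
  have hmemA : ∀ a, a ∈ UA ↔ ∀ p ∈ P, p.1 ≠ a := by
    intro a
    simp only [hUA, Finset.mem_compl, Finset.mem_image]
    push_neg
    exact Iff.rfl
  have hmemB : ∀ b, b ∈ UB ↔ ∀ p ∈ P, p.2 ≠ b := by
    intro b
    simp only [hUB, Finset.mem_compl, Finset.mem_image]
    push_neg
    exact Iff.rfl
  have hcard : UA.card = UB.card := by
    rw [Finset.card_compl, Finset.card_compl,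
      Finset.card_image_of_injOn (fun p hp q hq h => hP.2.1 p hp q hq h),
      Finset.card_image_of_injOn (fun p hp q hq h => hP.2.2 p hp q hq h)]
  obtain ⟨M₂, hM₂c, hM₂v⟩ := buildM (χ := χ) c' UA UB hcard
    (fun a ha b hb => max_unmatched hne hP hmax ((hmemA a).1 ha) ((hmemB b).1 hb))
  refine ⟨⟨c, P, hP.1, hP.2.1, hP.2.2, hconn, none, Or.inl rfl⟩, M₂, by simpa [hM₂c], ?_, ?_⟩
  · rw [Set.disjoint_left]
    rintro x hx hx'
    rw [hM₂v] at hx'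
    simp only [CMatching.verts, Set.mem_setOf_eq, Option.mem_def, reduceCtorEq, or_false] at hx
    obtain ⟨p, hp, rfl | rfl⟩ := hx
    · rcases hx' with ⟨a, ha, h⟩ | ⟨b, hb, h⟩
      · cases h; exact (hmemA _).1 ha p hp rfl
      · cases h
    · rcases hx' with ⟨a, ha, h⟩ | ⟨b, hb, h⟩
      · cases h
      · cases h; exact (hmemB _).1 hb p hp rfl
  · ext x
    simp only [Set.mem_union, Set.mem_univ, iff_true, hM₂v]
    rcases x with a | b
    · by_cases h : ∃ p ∈ P, p.1 = a
      · obtain ⟨p, hp, rfl⟩ := h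
        exact Or.inl (Or.inl ⟨p, hp, Or.inl rfl⟩)
      · push_neg at h
        exact Or.inr (Or.inl ⟨a, (hmemA a).2 h, rfl⟩)
    · by_cases h : ∃ p ∈ P, p.2 = b
      · obtain ⟨p, hp, rfl⟩ := h
        exact Or.inl (Or.inl ⟨p, hp, Or.inr rfl⟩)
      · push_neg at h
        exact Or.inr (Or.inr ⟨b, (hmemB b).2 h, rfl⟩)
end Aux

namespace Aux
variable {n : ℕ} {χ : Fin n → Fin n → Fin 2}

section Split
variable {c : Fin 2} {SA SB : Finset (Fin n)}

def side (SA SB : Finset (Fin n)) : (Fin n ⊕ Fin n) → Prop :=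
  Sum.elim (· ∈ SA) (· ∈ SB)

lemma reach_iff_side (hA : SA.Nonempty) (hA' : SAᶜ.Nonempty)
    (hB : SB.Nonempty) (hB' : SBᶜ.Nonempty)
    (hχ : ∀ a b, χ a b = c ↔ (a ∈ SA ↔ b ∈ SB)) (x y : Fin n ⊕ Fin n) :
    (colourGraph χ c).Reachable x y ↔ (side SA SB x ↔ side SA SB y) := by
  classical
  constructor
  · refine reach_invariant _ ?_
    rintro u v ⟨a, b, hab, ⟨rfl, rfl⟩ | ⟨rfl, rfl⟩⟩
    · exact (hχ a b).1 hab
    · exact ((hχ a b).1 hab).symm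
  · obtain ⟨b₀, hb₀⟩ := hB
    obtain ⟨b₁, hb₁⟩ := hB'
    rw [Finset.mem_compl] at hb₁
    obtain ⟨a₀, ha₀⟩ := hA
    obtain ⟨a₁, ha₁⟩ := hA'
    rw [Finset.mem_compl] at ha₁
    have key : ∀ a : Fin n, ∀ b : Fin n, (a ∈ SA ↔ b ∈ SB) →
        (colourGraph χ c).Reachable (Sum.inl a) (Sum.inr b) :=
      fun a b h => (adj_lr ((hχ a b).2 h)).reachable
    rcases x with a | b <;> rcases y with a' | b' <;> intro h <;>
      simp only [side, Sum.elim_inl, Sum.elim_inr] at h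
    · by_cases ha : a ∈ SA
      · exact (key a b₀ (by tauto)).trans (key a' b₀ (by tauto)).symm
      · exact (key a b₁ (by tauto)).trans (key a' b₁ (by tauto)).symm
    · exact key a b' h
    · exact (key a' b (Iff.symm h)).symm
    · by_cases hb : b ∈ SB
      · exact (key a₀ b (by tauto)).symm.trans (key a₀ b' (by tauto))
      · exact (key a₁ b (by tauto)).symm.trans (key a₁ b' (by tauto))

lemma isSplit_colour (hA : SA.Nonempty) (hA' : SAᶜ.Nonempty)
    (hB : SB.Nonempty) (hB' : SBᶜ.Nonempty)
    (hχ : ∀ a b, χ a b = c ↔ (a ∈ SA ↔ b ∈ SB)) :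
    (∀ K : (colourGraph χ c).ConnectedComponent, Nontriv χ c K) ∧
      Nat.card ((colourGraph χ c).ConnectedComponent) = 2 := by
  classical
  have hreach := reach_iff_side hA hA' hB hB' hχ
  obtain ⟨b₀, hb₀⟩ := hB
  obtain ⟨b₁, hb₁'⟩ := hB'
  have hb₁ : b₁ ∉ SB := Finset.mem_compl.1 hb₁'
  obtain ⟨a₀, ha₀⟩ := hA
  obtain ⟨a₁, ha₁'⟩ := hA'
  have ha₁ : a₁ ∉ SA := Finset.mem_compl.1 ha₁'
  have hmem : ∀ v w : Fin n ⊕ Fin n, (side SA SB v ↔ side SA SB w) →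
      v ∈ ((colourGraph χ c).connectedComponentMk w).supp :=
    fun v w h => (ConnectedComponent.mem_supp_iff _ _).2
      (ConnectedComponent.sound ((hreach _ _).2 h))
  constructor
  · intro K
    obtain ⟨v, rfl⟩ := K.exists_rep
    constructor
    · rcases v with a | b
      · exact ⟨a, hmem _ _ Iff.rfl⟩
      · by_cases hb : b ∈ SB
        · exact ⟨a₀, hmem _ _ (iff_of_true ha₀ hb)⟩
        · exact ⟨a₁, hmem _ _ (iff_of_false ha₁ hb)⟩
    · rcases v with a | b
      · by_cases ha : a ∈ SA
        · exact ⟨b₀, hmem _ _ (iff_of_true hb₀ ha)⟩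
        · exact ⟨b₁, hmem _ _ (iff_of_false hb₁ ha)⟩
      · exact ⟨b, hmem _ _ Iff.rfl⟩
  · rw [Nat.card_eq_two_iff]
    refine ⟨(colourGraph χ c).connectedComponentMk (Sum.inl a₀),
      (colourGraph χ c).connectedComponentMk (Sum.inl a₁), ?_, ?_⟩
    · intro h
      have := (hreach _ _).1 (ConnectedComponent.exact h)
      exact ha₁ (this.1 ha₀)
    · rw [Set.eq_univ_iff_forall]
      intro K
      obtain ⟨v, rfl⟩ := K.exists_rep
      by_cases hv : side SA SB v
      · exact Or.inl (ConnectedComponent.sound ((hreach _ _).2 (iff_of_true hv ha₀)))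
      · exact Or.inr (ConnectedComponent.sound ((hreach v (Sum.inl a₁)).2 (iff_of_false hv ha₁)))

end Split
end Aux

namespace Aux
variable {n : ℕ} {χ : Fin n → Fin n → Fin 2}

lemma card_le {s : Finset (Fin n)} : s.card ≤ n := by
  simpa using Finset.card_le_card s.subset_univ

lemma cons1 (c c' : Fin 2) (hne : c ≠ c') (SA SB : Finset (Fin n))
    (hχ : ∀ a b, χ a b = c ↔ (a ∈ SA ↔ b ∈ SB)) (hpq : n ≤ SA.card + SB.card) :
    ∃ M₁ M₂ M₃ : CMatching n 2 χ,
      M₁.colour = c ∧ M₂.colour = c' ∧ M₃.colour = c' ∧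
      Disjoint M₁.verts M₂.verts ∧ Disjoint M₁.verts M₃.verts ∧
      Disjoint M₂.verts M₃.verts ∧
      M₁.verts ∪ M₂.verts ∪ M₃.verts = Set.univ := by
  classical
  set t := SA.card + SB.card - n with ht
  have hA : SA.card ≤ n := card_le
  have hB : SB.card ≤ n := card_le
  obtain ⟨TA, hTA, hTAcard⟩ := Finset.exists_subset_card_eq (s := SA) (n := t) (by omega)
  obtain ⟨TB, hTB, hTBcard⟩ := Finset.exists_subset_card_eq (s := SB) (n := t) (by omega)
  have hcol1 : ∀ a ∈ TA, ∀ b ∈ TB, χ a b = c :=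
    fun a ha b hb => (hχ a b).2 (iff_of_true (hTA ha) (hTB hb))
  have hcol2 : ∀ a ∈ SA \ TA, ∀ b ∈ SBᶜ, χ a b = c' := by
    intro a ha b hb
    have : χ a b ≠ c := fun h =>
      (Finset.mem_compl.1 hb) (((hχ a b).1 h).1 (Finset.mem_sdiff.1 ha).1)
    omega
  have hcol3 : ∀ a ∈ SAᶜ, ∀ b ∈ SB \ TB, χ a b = c' := by
    intro a ha b hb
    have : χ a b ≠ c := fun h =>
      (Finset.mem_compl.1 ha) (((hχ a b).1 h).2 (Finset.mem_sdiff.1 hb).1)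
    omega
  have hc2 : (SA \ TA).card = SBᶜ.card := by
    rw [Finset.card_sdiff_of_subset hTA, Finset.card_compl, Fintype.card_fin]; omega
  have hc3 : SAᶜ.card = (SB \ TB).card := by
    rw [Finset.card_sdiff_of_subset hTB, Finset.card_compl, Fintype.card_fin]; omega
  obtain ⟨M₁, hM₁c, hM₁v⟩ := buildM c TA TB (by omega) hcol1
  obtain ⟨M₂, hM₂c, hM₂v⟩ := buildM c' (SA \ TA) SBᶜ hc2 hcol2
  obtain ⟨M₃, hM₃c, hM₃v⟩ := buildM c' SAᶜ (SB \ TB) hc3 hcol3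
  have key : ∀ (s₁ t₁ s₂ t₂ : Finset (Fin n)), Disjoint s₁ s₂ → Disjoint t₁ t₂ →
      Disjoint {x : Fin n ⊕ Fin n | (∃ a ∈ s₁, x = Sum.inl a) ∨ ∃ b ∈ t₁, x = Sum.inr b}
        {x | (∃ a ∈ s₂, x = Sum.inl a) ∨ ∃ b ∈ t₂, x = Sum.inr b} := by
    intro s₁ t₁ s₂ t₂ hs ht
    rw [Set.disjoint_left]
    rintro x (⟨a, ha, rfl⟩ | ⟨b, hb, rfl⟩) (⟨a', ha', h⟩ | ⟨b', hb', h⟩) <;>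
      cases h
    · exact Finset.disjoint_left.1 hs ha ha'
    · exact Finset.disjoint_left.1 ht hb hb'
  have d1 : Disjoint TA (SA \ TA) := by
    rw [Finset.disjoint_left]; exact fun x hx hx' => (Finset.mem_sdiff.1 hx').2 hx
  have d2 : Disjoint TA SAᶜ := by
    rw [Finset.disjoint_left]; exact fun x hx hx' => (Finset.mem_compl.1 hx') (hTA hx)
  have d3 : Disjoint (SA \ TA) SAᶜ := by
    rw [Finset.disjoint_left]
    exact fun x hx hx' => (Finset.mem_compl.1 hx') (Finset.mem_sdiff.1 hx).1
  have e1 : Disjoint TB SBᶜ := by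
    rw [Finset.disjoint_left]; exact fun x hx hx' => (Finset.mem_compl.1 hx') (hTB hx)
  have e2 : Disjoint TB (SB \ TB) := by
    rw [Finset.disjoint_left]; exact fun x hx hx' => (Finset.mem_sdiff.1 hx').2 hx
  have e3 : Disjoint SBᶜ (SB \ TB) := by
    rw [Finset.disjoint_left]
    exact fun x hx hx' => (Finset.mem_compl.1 hx) (Finset.mem_sdiff.1 hx').1
  refine ⟨M₁, M₂, M₃, hM₁c, hM₂c, hM₃c, ?_, ?_, ?_, ?_⟩
  · rw [hM₁v, hM₂v]; exact key _ _ _ _ d1 e1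
  · rw [hM₁v, hM₃v]; exact key _ _ _ _ d2 e2
  · rw [hM₂v, hM₃v]; exact key _ _ _ _ d3 e3
  · rw [hM₁v, hM₂v, hM₃v, Set.eq_univ_iff_forall]
    rintro (a | b)
    · by_cases h1 : a ∈ TA
      · exact Or.inl (Or.inl (Or.inl ⟨a, h1, rfl⟩))
      · by_cases h2 : a ∈ SA
        · exact Or.inl (Or.inr (Or.inl ⟨a, Finset.mem_sdiff.2 ⟨h2, h1⟩, rfl⟩))
        · exact Or.inr (Or.inl ⟨a, Finset.mem_compl.2 h2, rfl⟩)
    · by_cases h1 : b ∈ TB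
      · exact Or.inl (Or.inl (Or.inr ⟨b, h1, rfl⟩))
      · by_cases h2 : b ∈ SB
        · exact Or.inr (Or.inr ⟨b, Finset.mem_sdiff.2 ⟨h2, h1⟩, rfl⟩)
        · exact Or.inl (Or.inr (Or.inr ⟨b, Finset.mem_compl.2 h2, rfl⟩))

lemma cons (c c' : Fin 2) (hne : c ≠ c') (SA SB : Finset (Fin n))
    (hχ : ∀ a b, χ a b = c ↔ (a ∈ SA ↔ b ∈ SB)) :
    ∃ M₁ M₂ M₃ : CMatching n 2 χ,
      M₁.colour = c ∧ M₂.colour = c' ∧ M₃.colour = c' ∧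
      Disjoint M₁.verts M₂.verts ∧ Disjoint M₁.verts M₃.verts ∧
      Disjoint M₂.verts M₃.verts ∧
      M₁.verts ∪ M₂.verts ∪ M₃.verts = Set.univ := by
  classical
  by_cases h : n ≤ SA.card + SB.card
  · exact cons1 c c' hne SA SB hχ h
  · refine cons1 c c' hne SAᶜ SBᶜ (fun a b => (hχ a b).trans (by simp only [Finset.mem_compl]; tauto)) ?_
    have hA : SA.card ≤ n := card_le
    have hB : SB.card ≤ n := card_le
    rw [Finset.card_compl, Finset.card_compl, Fintype.card_fin]
    omega

end Aux

set_option maxHeartbeats 1000000 in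
/-- For any 2-edge-colouring of `K_{n,n}`: either two vertex-disjoint
monochromatic connected matchings, one of each colour, span the graph, or the
colouring is split and the graph is spanned both by one matching of the first
colour together with two of the second, and vice versa. -/
theorem two_coloured_matching_cover {n : ℕ} (χ : Fin n → Fin n → Fin 2) :
    (∃ M₁ M₂ : CMatching n 2 χ, M₁.colour ≠ M₂.colour ∧
      Disjoint M₁.verts M₂.verts ∧ M₁.verts ∪ M₂.verts = Set.univ) ∨
    (IsSplit χ ∧
      ∀ c₁ c₂ : Fin 2, c₁ ≠ c₂ →
        ∃ M₁ M₂ M₃ : CMatching n 2 χ,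
          M₁.colour = c₁ ∧ M₂.colour = c₂ ∧ M₃.colour = c₂ ∧
          Disjoint M₁.verts M₂.verts ∧ Disjoint M₁.verts M₃.verts ∧
          Disjoint M₂.verts M₃.verts ∧
          M₁.verts ∪ M₂.verts ∪ M₃.verts = Set.univ) := by
  classical
  obtain ⟨P, hP, hPmax⟩ := Aux.exists_max (χ := χ) 0
  obtain ⟨Q, hQ, hQmax⟩ := Aux.exists_max (χ := χ) 1
  by_cases hPconn : ∀ p ∈ P, ∀ q ∈ P,
      (colourGraph χ 0).Reachable (Sum.inl p.1) (Sum.inl q.1)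
  · exact Or.inl (Aux.lemA (show (0 : Fin 2) ≠ 1 by decide) hP hPmax hPconn)
  by_cases hQconn : ∀ p ∈ Q, ∀ q ∈ Q,
      (colourGraph χ 1).Reachable (Sum.inl p.1) (Sum.inl q.1)
  · exact Or.inl (Aux.lemA (show (1 : Fin 2) ≠ 0 by decide) hQ hQmax hQconn)
  push_neg at hPconn hQconn
  obtain ⟨p, hp, q, hq, hnr⟩ := hPconn
  obtain ⟨p', hp', q', hq', hnb⟩ := hQconn
  set a₁ := p.1 with ha₁d; set b₁ := p.2 with hb₁d
  set a₂ := q.1 with ha₂d; set b₂ := q.2 with hb₂d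
  have hred1 : χ a₁ b₁ = 0 := hP.1 p hp
  have hred2 : χ a₂ b₂ = 0 := hP.1 q hq
  set SA : Finset (Fin n) :=
    Finset.univ.filter (fun a => (colourGraph χ 0).Reachable (Sum.inl a) (Sum.inl a₁)) with hSA
  set SB : Finset (Fin n) :=
    Finset.univ.filter (fun b => (colourGraph χ 0).Reachable (Sum.inr b) (Sum.inl a₁)) with hSB
  have hmemSA : ∀ a, a ∈ SA ↔ (colourGraph χ 0).Reachable (Sum.inl a) (Sum.inl a₁) := by
    intro a; simp [hSA]
  have hmemSB : ∀ b, b ∈ SB ↔ (colourGraph χ 0).Reachable (Sum.inr b) (Sum.inl a₁) := by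
    intro b; simp [hSB]
  have ha₁SA : a₁ ∈ SA := (hmemSA a₁).2 (Reachable.refl _)
  have hb₁SB : b₁ ∈ SB := (hmemSB b₁).2 (Aux.adj_lr hred1).symm.reachable
  have ha₂SA : a₂ ∉ SA := fun h => hnr ((hmemSA a₂).1 h).symm
  have hb₂SB : b₂ ∉ SB := fun h =>
    hnr (((Aux.adj_lr hred2).reachable.trans ((hmemSB b₂).1 h)).symm)
  have hblue12 : χ a₁ b₂ = 1 := by
    have : χ a₁ b₂ ≠ 0 := fun h => hb₂SB ((hmemSB b₂).2 (Aux.adj_lr h).symm.reachable)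
    omega
  have hblue21 : χ a₂ b₁ = 1 := by
    have : χ a₂ b₁ ≠ 0 := fun h =>
      hnr (((Aux.adj_lr h).reachable.trans ((hmemSB b₁).1 hb₁SB)).symm)
    omega
  -- every vertex is blue-reachable to (inl a₁) or (inr b₁)
  have hevery : ∀ v : Fin n ⊕ Fin n,
      (colourGraph χ 1).Reachable v (Sum.inl a₁) ∨
      (colourGraph χ 1).Reachable v (Sum.inr b₁) := by
    rintro (a | b)
    · by_cases h2 : χ a b₂ = 1
      · exact Or.inl (Aux.reach_of_two h2 hblue12)
      · by_cases h1 : χ a b₁ = 1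
        · exact Or.inr (Aux.adj_lr h1).reachable
        · exfalso
          have e1 : χ a b₁ = 0 := by omega
          have e2 : χ a b₂ = 0 := by omega
          exact hnr ((Aux.adj_lr hred1).reachable.trans
            ((Aux.adj_lr e1).symm.reachable.trans
              ((Aux.adj_lr e2).reachable.trans (Aux.adj_lr hred2).symm.reachable)))
    · by_cases h1 : χ a₁ b = 1
      · exact Or.inl (Aux.adj_lr h1).symm.reachable
      · have e1 : χ a₁ b = 0 := by omega
        have h2 : χ a₂ b = 1 := by
          have : χ a₂ b ≠ 0 := fun h => hnr (Aux.reach_of_two e1 h)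
          omega
        exact Or.inr ((Aux.adj_lr h2).symm.reachable.trans (Aux.adj_lr hblue21).reachable)
  have hχ0 : ∀ a b, χ a b = 0 ↔ (a ∈ SA ↔ b ∈ SB) := by
    intro a b
    constructor
    · intro h
      have hr := (Aux.adj_lr h).reachable
      constructor
      · exact fun ha => (hmemSB b).2 (hr.symm.trans ((hmemSA a).1 ha))
      · exact fun hb => (hmemSA a).2 (hr.trans ((hmemSB b).1 hb))
    · intro hiff
      by_contra hne0
      have hblue : χ a b = 1 := by omega
      have hS : (colourGraph χ 1).Reachable (Sum.inl a₁) (Sum.inr b₁) := by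
        by_cases ha : a ∈ SA
        · have hb : b ∈ SB := hiff.1 ha
          have h1 : χ a b₂ = 1 := by
            have : χ a b₂ ≠ 0 := fun h =>
              hb₂SB ((hmemSB b₂).2 ((Aux.adj_lr h).symm.reachable.trans ((hmemSA a).1 ha)))
            omega
          have h2 : χ a₂ b = 1 := by
            have : χ a₂ b ≠ 0 := fun h =>
              hnr ((Aux.adj_lr h).reachable.trans ((hmemSB b).1 hb)).symm
            omega
          exact (Aux.adj_lr hblue12).reachable.trans
            ((Aux.adj_lr h1).symm.reachable.trans
              ((Aux.adj_lr hblue).reachable.trans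
                ((Aux.adj_lr h2).symm.reachable.trans (Aux.adj_lr hblue21).reachable)))
        · have hb : b ∉ SB := fun h => ha (hiff.2 h)
          have h1 : χ a b₁ = 1 := by
            have : χ a b₁ ≠ 0 := fun h => ha ((hmemSA a).2 (Aux.reach_of_two h hred1))
            omega
          have h2 : χ a₁ b = 1 := by
            have : χ a₁ b ≠ 0 := fun h => hb ((hmemSB b).2 (Aux.adj_lr h).symm.reachable)
            omega
          exact (Aux.adj_lr h2).reachable.trans
            ((Aux.adj_lr hblue).symm.reachable.trans (Aux.adj_lr h1).reachable)
      have to_a₁ : ∀ v, (colourGraph χ 1).Reachable v (Sum.inl a₁) :=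
        fun v => (hevery v).elim id (fun h => h.trans hS.symm)
      exact hnb ((to_a₁ _).trans (to_a₁ _).symm)
  have hχ1 : ∀ a b, χ a b = 1 ↔ (a ∈ SA ↔ b ∈ SBᶜ) := by
    intro a b
    have h0 := hχ0 a b
    have : χ a b = 1 ↔ ¬ χ a b = 0 := by omega
    rw [this, h0]
    simp only [Finset.mem_compl]
    constructor
    · intro h
      constructor
      · intro ha hb; exact h (iff_of_true ha hb)
      · intro hnb
        by_contra ha
        exact h (iff_of_false ha hnb)
    · intro h hiff
      by_cases ha : a ∈ SA
      · exact (h.1 ha) (hiff.1 ha)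
      · by_cases hb : b ∈ SB
        · exact ha (hiff.2 hb)
        · exact ha (h.2 hb)
  have hAne : SA.Nonempty := ⟨a₁, ha₁SA⟩
  have hAcne : SAᶜ.Nonempty := ⟨a₂, Finset.mem_compl.2 ha₂SA⟩
  have hBne : SB.Nonempty := ⟨b₁, hb₁SB⟩
  have hBcne : SBᶜ.Nonempty := ⟨b₂, Finset.mem_compl.2 hb₂SB⟩
  have hBccne : SBᶜᶜ.Nonempty := ⟨b₁, by simpa using hb₁SB⟩
  have hs0 := Aux.isSplit_colour (c := 0) (SA := SA) (SB := SB) hAne hAcne hBne hBcne hχ0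
  have hs1 := Aux.isSplit_colour (c := 1) (SA := SA) (SB := SBᶜ) hAne hAcne hBcne hBccne hχ1
  refine Or.inr ⟨⟨?_, ?_⟩, ?_⟩
  · intro c
    fin_cases c
    · exact hs0.1
    · exact hs1.1
  · intro c
    fin_cases c
    · exact hs0.2
    · exact hs1.2
  · intro c₁ c₂ hcc
    fin_cases c₁ <;> fin_cases c₂
    · exact absurd rfl hcc
    · exact Aux.cons 0 1 (by decide) SA SB hχ0
    · exact Aux.cons 1 0 (by decide) SA SBᶜ hχ1
    · exact absurd rfl hcc
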